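/- arXiv:2503.14747 — 2 statements merged into one kernel-verified Lean document; each statement's English description precedes it below -/
import Mathlib

section
/- Let {Vₙ} be a sequence of real random variables with Vₙ → V in probability, where the law of V has atoms only at points of a finite set D, and suppose sup_{t∈ℝ} |F_{Vₙ}(t) - F_V(t)| → 0 where F_{Vₙ}, F_V denote the CDFs. Then P({V ∈ D} ∩ {Vₙ ≠ V}) → 0 as n → ∞. -/
open MeasureTheory Filter

/-- Measure of an `Ioc`-type event in terms of CDF values. -/
lemma ioc_meas {Ω : Type*} [MeasurableSpace Ω] (P : Measure Ω) [IsProbabilityMeasure P]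
    (X : Ω → ℝ) (hX : Measurable X) {a b : ℝ} (hab : a ≤ b) :
    P {ω | a < X ω ∧ X ω ≤ b}
      = ENNReal.ofReal ((P {ω | X ω ≤ b}).toReal - (P {ω | X ω ≤ a}).toReal) := by
  have hset : {ω | a < X ω ∧ X ω ≤ b} = {ω | X ω ≤ b} \ {ω | X ω ≤ a} := by
    ext ω; simp only [Set.mem_setOf_eq, Set.mem_diff, not_le]; tauto
  have hsub : {ω | X ω ≤ a} ⊆ {ω | X ω ≤ b} := fun ω h => le_trans h hab
  have hma : MeasurableSet {ω | X ω ≤ a} := hX measurableSet_Iic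
  have hfin : P {ω | X ω ≤ a} ≠ ⊤ := measure_ne_top _ _
  have hd : P ({ω | X ω ≤ b} \ {ω | X ω ≤ a})
      = P {ω | X ω ≤ b} - P {ω | X ω ≤ a} :=
    measure_diff hsub hma.nullMeasurableSet hfin
  have hle : P {ω | X ω ≤ a} ≤ P {ω | X ω ≤ b} := measure_mono hsub
  have htr : (P {ω | X ω ≤ b} - P {ω | X ω ≤ a}).toReal
      = (P {ω | X ω ≤ b}).toReal - (P {ω | X ω ≤ a}).toReal :=
    ENNReal.toReal_sub_of_le hle (measure_ne_top _ _)
  have hnt : P {ω | X ω ≤ b} - P {ω | X ω ≤ a} ≠ ⊤ :=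
    ne_top_of_le_ne_top (measure_ne_top _ _) tsub_le_self
  rw [hset, hd, ← htr, ENNReal.ofReal_toReal hnt]

/-- The per-atom statement: if `Vₙ → V` in probability and the CDFs converge uniformly,
then `P({V = d} ∩ {Vₙ ≠ V}) → 0` for every `d`. -/
lemma atom_tendsto {Ω : Type*} [MeasurableSpace Ω] (P : Measure Ω) [IsProbabilityMeasure P]
    (V : Ω → ℝ) (Vn : ℕ → Ω → ℝ) (hV : Measurable V) (hVn : ∀ n, Measurable (Vn n))
    (hprob : ∀ ε : ℝ, 0 < ε →
      Tendsto (fun n => P {ω | ε ≤ |Vn n ω - V ω|}) atTop (nhds 0))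
    (hcdf : ∀ δ : ℝ, 0 < δ → ∃ N : ℕ, ∀ n ≥ N, ∀ t : ℝ,
      |(P {ω | Vn n ω ≤ t}).toReal - (P {ω | V ω ≤ t}).toReal| ≤ δ) (d : ℝ) :
    Tendsto (fun n => P ({ω | V ω = d} ∩ {ω | Vn n ω ≠ V ω})) atTop (nhds 0) := by
  rw [ENNReal.tendsto_atTop_zero]
  intro η hη
  by_cases hη1 : (1 : ENNReal) ≤ η
  · exact ⟨0, fun n _ => le_trans prob_le_one hη1⟩
  push_neg at hη1
  have hηtop : η ≠ ⊤ := (lt_of_lt_of_le hη1 le_top).ne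
  set r : ℝ := η.toReal with hr
  have hr0 : 0 < r := ENNReal.toReal_pos hη.ne' hηtop
  have hofr : ENNReal.ofReal r = η := ENNReal.ofReal_toReal hηtop
  -- choose ε so that P(V ∈ (d-ε, d+ε] \ {d}) ≤ r/8
  set S : ℕ → Set Ω := fun k =>
    {ω | (d - 1 / (k + 1) < V ω ∧ V ω ≤ d + 1 / (k + 1)) ∧ V ω ≠ d} with hSdef
  have hSmeas : ∀ k, MeasurableSet (S k) := by
    intro k
    exact ((measurableSet_lt measurable_const hV).inter
      (measurableSet_le hV measurable_const)).inter
      ((hV (measurableSet_singleton d)).compl)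
  have hSanti : Antitone S := by
    intro k m hkm ω hω
    obtain ⟨⟨h1, h2⟩, h3⟩ := hω
    have hdiv : (1 : ℝ) / (m + 1) ≤ 1 / (k + 1) := by
      apply one_div_le_one_div_of_le
      · positivity
      · have := (Nat.cast_le (α := ℝ)).mpr hkm; linarith
    exact ⟨⟨by linarith, by linarith⟩, h3⟩
  have hSempty : ⋂ k, S k = ∅ := by
    ext ω
    simp only [Set.mem_iInter, Set.mem_empty_iff_false, iff_false]
    intro h
    have hne := (h 0).2
    apply hne
    have h1 : V ω ≤ d := by
      by_contra hc
      push_neg at hc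
      obtain ⟨k, hk⟩ := exists_nat_one_div_lt (sub_pos.mpr hc)
      have := (h k).1.2
      linarith
    have h2 : d ≤ V ω := by
      by_contra hc
      push_neg at hc
      obtain ⟨k, hk⟩ := exists_nat_one_div_lt (sub_pos.mpr hc)
      have := (h k).1.1
      linarith
    linarith
  have hStend : Tendsto (fun k => P (S k)) atTop (nhds 0) := by
    have := MeasureTheory.tendsto_measure_iInter_atTop
      (μ := P) (s := S) (fun k => (hSmeas k).nullMeasurableSet) hSanti
      ⟨0, measure_ne_top _ _⟩
    rwa [hSempty, measure_empty] at this
  obtain ⟨k0, hk0⟩ := ENNReal.tendsto_atTop_zero.mp hStend (ENNReal.ofReal (r / 8))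
    (ENNReal.ofReal_pos.mpr (by linarith))
  set ε : ℝ := 1 / (k0 + 1) with hεdef
  have hε : 0 < ε := by positivity
  have hSbound : P {ω | (d - ε < V ω ∧ V ω ≤ d + ε) ∧ V ω ≠ d} ≤ ENNReal.ofReal (r / 8) :=
    hk0 k0 le_rfl
  -- uniform CDF bound with δ = r/16
  obtain ⟨N1, hN1⟩ := hcdf (r / 16) (by linarith)
  -- convergence in probability
  obtain ⟨N2, hN2⟩ := ENNReal.tendsto_atTop_zero.mp (hprob ε hε) (ENNReal.ofReal (r / 4))
    (ENNReal.ofReal_pos.mpr (by linarith))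
  refine ⟨max N1 N2, fun n hn => ?_⟩
  have hn1 : n ≥ N1 := le_trans (le_max_left _ _) hn
  have hn2 : n ≥ N2 := le_trans (le_max_right _ _) hn
  -- notation for CDFs
  set Gn : ℝ → ℝ := fun t => (P {ω | Vn n ω ≤ t}).toReal with hGn
  set G : ℝ → ℝ := fun t => (P {ω | V ω ≤ t}).toReal with hG
  have hGnG : ∀ t, |Gn t - G t| ≤ r / 16 := hN1 n hn1
  -- a generic Ioc bound: if Ioc (a,b] (for V) sits inside the small set, then
  -- P(Vn ∈ (a,b]) ≤ ofReal (r/4)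
  have key : ∀ a b : ℝ, a ≤ b →
      {ω | a < V ω ∧ V ω ≤ b} ⊆ {ω | (d - ε < V ω ∧ V ω ≤ d + ε) ∧ V ω ≠ d} →
      P {ω | a < Vn n ω ∧ Vn n ω ≤ b} ≤ ENNReal.ofReal (r / 4) := by
    intro a b hab hsub
    rw [ioc_meas P (Vn n) (hVn n) hab]
    have hVab : P {ω | a < V ω ∧ V ω ≤ b} ≤ ENNReal.ofReal (r / 8) :=
      le_trans (measure_mono hsub) hSbound
    have hVeq : P {ω | a < V ω ∧ V ω ≤ b} = ENNReal.ofReal (G b - G a) :=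
      ioc_meas P V hV hab
    have hVReal : G b - G a ≤ r / 8 := by
      rcases le_or_gt (G b - G a) 0 with h | h
      · linarith
      · have h2 : (ENNReal.ofReal (G b - G a)).toReal ≤ (ENNReal.ofReal (r / 8)).toReal :=
          ENNReal.toReal_mono (by simp) (hVeq ▸ hVab)
        rwa [ENNReal.toReal_ofReal h.le, ENNReal.toReal_ofReal (by linarith)] at h2
    apply ENNReal.ofReal_le_ofReal
    have ha := abs_le.mp (hGnG a)
    have hb := abs_le.mp (hGnG b)
    linarith
  -- the inclusion into three sets
  have hincl : {ω | V ω = d} ∩ {ω | Vn n ω ≠ V ω} ⊆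
      {ω | ε ≤ |Vn n ω - V ω|} ∪
      ({ω | d - ε < Vn n ω ∧ Vn n ω < d} ∪ {ω | d < Vn n ω ∧ Vn n ω ≤ d + ε}) := by
    intro ω hω
    obtain ⟨hVd, hne⟩ := hω
    simp only [Set.mem_setOf_eq] at hVd hne
    rcases le_or_gt ε |Vn n ω - V ω| with h | h
    · exact Or.inl h
    · right
      rw [hVd] at hne h
      rw [abs_lt] at h
      rcases lt_or_gt_of_ne hne with hlt | hgt
      · exact Or.inl ⟨by linarith [h.1], hlt⟩
      · exact Or.inr ⟨hgt, by linarith [h.2]⟩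
  have hP1 : P {ω | ε ≤ |Vn n ω - V ω|} ≤ ENNReal.ofReal (r / 4) := hN2 n hn2
  have hP3 : P {ω | d < Vn n ω ∧ Vn n ω ≤ d + ε} ≤ ENNReal.ofReal (r / 4) := by
    apply key d (d + ε) (by linarith)
    intro ω hω
    obtain ⟨h1, h2⟩ := hω
    exact ⟨⟨by linarith, h2⟩, by intro hc; rw [hc] at h1; linarith⟩
  have hP2 : P {ω | d - ε < Vn n ω ∧ Vn n ω < d} ≤ ENNReal.ofReal (r / 4) := by
    -- write the open interval as a monotone union of Iocs
    set A : ℕ → Set Ω := fun k => {ω | d - ε < Vn n ω ∧ Vn n ω ≤ d - ε / (k + 1)} with hA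
    have hAmono : Monotone A := by
      intro k m hkm ω hω
      obtain ⟨h1, h2⟩ := hω
      have : ε / (m + 1) ≤ ε / (k + 1) := by
        apply div_le_div_of_nonneg_left hε.le (by positivity)
        have := (Nat.cast_le (α := ℝ)).mpr hkm; linarith
      exact ⟨h1, by linarith⟩
    have hAeq : {ω | d - ε < Vn n ω ∧ Vn n ω < d} = ⋃ k, A k := by
      ext ω
      simp only [Set.mem_setOf_eq, Set.mem_iUnion, hA]
      constructor
      · rintro ⟨h1, h2⟩
        obtain ⟨k, hk⟩ := exists_nat_one_div_lt (div_pos (sub_pos.mpr h2) hε)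
        refine ⟨k, h1, ?_⟩
        have hk1 : (0:ℝ) < (k:ℝ) + 1 := by positivity
        have : ε / (k + 1) < d - Vn n ω := by
          rw [div_lt_iff₀ hk1]
          have := (div_lt_div_iff₀ hk1 hε).mp hk
          linarith [this]
        linarith
      · rintro ⟨k, h1, h2⟩
        have : (0:ℝ) < ε / (k + 1) := by positivity
        exact ⟨h1, by linarith⟩
    rw [hAeq]
    have hdir : Directed (fun x1 x2 => x1 ⊆ x2) A := hAmono.directed_le
    rw [hdir.measure_iUnion]
    apply iSup_le
    intro k
    rcases le_or_gt (d - ε) (d - ε / (k + 1)) with hab | hab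
    · apply key (d - ε) (d - ε / (k + 1)) hab
      intro ω hω
      obtain ⟨h1, h2⟩ := hω
      have hpos : (0:ℝ) < ε / (k + 1) := by positivity
      refine ⟨⟨h1, by linarith⟩, ?_⟩
      intro hc; rw [hc] at h2; linarith
    · have : A k = ∅ := by
        ext ω; simp only [hA, Set.mem_setOf_eq, Set.mem_empty_iff_false, iff_false]
        rintro ⟨h1, h2⟩; linarith
      rw [this, measure_empty]; exact zero_le
  calc P ({ω | V ω = d} ∩ {ω | Vn n ω ≠ V ω})
      ≤ P ({ω | ε ≤ |Vn n ω - V ω|} ∪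
        ({ω | d - ε < Vn n ω ∧ Vn n ω < d} ∪ {ω | d < Vn n ω ∧ Vn n ω ≤ d + ε})) :=
        measure_mono hincl
    _ ≤ P {ω | ε ≤ |Vn n ω - V ω|} +
        P ({ω | d - ε < Vn n ω ∧ Vn n ω < d} ∪ {ω | d < Vn n ω ∧ Vn n ω ≤ d + ε}) :=
        measure_union_le _ _
    _ ≤ P {ω | ε ≤ |Vn n ω - V ω|} +
        (P {ω | d - ε < Vn n ω ∧ Vn n ω < d} + P {ω | d < Vn n ω ∧ Vn n ω ≤ d + ε}) := by
        gcongr; exact measure_union_le _ _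
    _ ≤ ENNReal.ofReal (r / 4) + (ENNReal.ofReal (r / 4) + ENNReal.ofReal (r / 4)) := by
        gcongr
    _ = ENNReal.ofReal (r / 4 + (r / 4 + r / 4)) := by
        rw [ENNReal.ofReal_add (by linarith) (by linarith),
          ENNReal.ofReal_add (by linarith) (by linarith)]
    _ ≤ ENNReal.ofReal r := ENNReal.ofReal_le_ofReal (by linarith)
    _ = η := hofr

/-- If `Vₙ → V` in probability, the law of `V` has atoms only at points of
a finite set `D`, and the CDFs of `Vₙ` converge to the CDF of `V` uniformly over `ℝ`,
then `P({V ∈ D} ∩ {Vₙ ≠ V}) → 0`. -/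
theorem stmt5 {Ω : Type*} [MeasurableSpace Ω] (P : Measure Ω) [IsProbabilityMeasure P]
    (V : Ω → ℝ) (Vn : ℕ → Ω → ℝ) (hV : Measurable V) (hVn : ∀ n, Measurable (Vn n))
    (hprob : ∀ ε : ℝ, 0 < ε →
      Tendsto (fun n => P {ω | ε ≤ |Vn n ω - V ω|}) atTop (nhds 0))
    (D : Set ℝ) (hD : D.Finite)
    (hatoms : ∀ x : ℝ, x ∉ D → P {ω | V ω = x} = 0)
    (hcdf : ∀ δ : ℝ, 0 < δ → ∃ N : ℕ, ∀ n ≥ N, ∀ t : ℝ,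
      |(P {ω | Vn n ω ≤ t}).toReal - (P {ω | V ω ≤ t}).toReal| ≤ δ) :
    Tendsto (fun n => P ({ω | V ω ∈ D} ∩ {ω | Vn n ω ≠ V ω})) atTop (nhds 0) := by
  classical
  have hle : ∀ n, P ({ω | V ω ∈ D} ∩ {ω | Vn n ω ≠ V ω})
      ≤ ∑ d ∈ hD.toFinset, P ({ω | V ω = d} ∩ {ω | Vn n ω ≠ V ω}) := by
    intro n
    refine le_trans (measure_mono ?_) (measure_biUnion_finset_le hD.toFinset
      (fun d => {ω | V ω = d} ∩ {ω | Vn n ω ≠ V ω}))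
    intro ω hω
    obtain ⟨hVD, hne⟩ := hω
    exact Set.mem_biUnion (hD.mem_toFinset.mpr hVD) ⟨rfl, hne⟩
  have hsum : Tendsto (fun n => ∑ d ∈ hD.toFinset,
      P ({ω | V ω = d} ∩ {ω | Vn n ω ≠ V ω})) atTop (nhds 0) := by
    have := tendsto_finset_sum hD.toFinset
      (fun d _ => atom_tendsto P V Vn hV hVn hprob hcdf d)
    simpa using this
  exact tendsto_of_tendsto_of_tendsto_of_le_of_le tendsto_const_nhds hsum
    (fun n => zero_le) hle
end

section
/- Let U₁,…,U_q be i.i.d. Uniform(0,1) random variables, let F_Y, F_X : ℝ → [0,1] be CDFs with F_Y(t) ≤ F_X(t) for all t ∈ ℝ, and let c ∈ ℝ. Define for a set A ⊆ ℝ the statistic T_A = sup_{t∈A} [(1/q_y)·#{j ≤ q_y : Uⱼ ≤ F_Y(t)} − (1/q_x)·#{q_y < j ≤ q : Uⱼ ≤ F_X(t)}]. Then P(T_ℝ > c) ≤ P(sup_{u∈(0,1)} Δ(u) > c), where Δ(u) = (1/q_y)·#{j ≤ q_y : Uⱼ ≤ u} − (1/q_x)·#{q_y < j ≤ q : Uⱼ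 ≤ u}. -/
open MeasureTheory ProbabilityTheory

/-- Core size-control inequality. For i.i.d. `U(0,1)` variables
`U₁,…,U_q` (`q = q_y + q_x`) and CDFs `F_Y ≤ F_X` pointwise,
`P(sup_{t∈ℝ} [(1/q_y)#{j ≤ q_y : U_j ≤ F_Y(t)} − (1/q_x)#{j > q_y : U_j ≤ F_X(t)}] > c)
  ≤ P(sup_{u∈(0,1)} Δ(u) > c)`. -/
theorem stmt10 {Ω : Type*} [MeasurableSpace Ω] (P : Measure Ω) [IsProbabilityMeasure P]
    (qy qx : ℕ) (hqy : 0 < qy) (hqx : 0 < qx)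
    (U : Fin (qy + qx) → Ω → ℝ) (hmeas : ∀ j, Measurable (U j))
    (hindep : iIndepFun U P)
    (hunif : ∀ j, Measure.map (U j) P = volume.restrict (Set.Ioo (0 : ℝ) 1))
    (FY FX : ℝ → ℝ) (hFYmono : Monotone FY) (hFXmono : Monotone FX)
    (hFY01 : ∀ t, FY t ∈ Set.Icc (0 : ℝ) 1) (hFX01 : ∀ t, FX t ∈ Set.Icc (0 : ℝ) 1)
    (hdom : ∀ t, FY t ≤ FX t) (c : ℝ) :
    P {ω | c < ⨆ t : ℝ,
        (((Finset.univ.filter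
            (fun j : Fin qy => U (Fin.castAdd qx j) ω ≤ FY t)).card : ℝ) / qy -
          ((Finset.univ.filter
            (fun j : Fin qx => U (Fin.natAdd qy j) ω ≤ FX t)).card : ℝ) / qx)} ≤
      P {ω | c < sSup ((fun u : ℝ =>
          ((Finset.univ.filter
            (fun j : Fin qy => U (Fin.castAdd qx j) ω ≤ u)).card : ℝ) / qy -
            ((Finset.univ.filter
            (fun j : Fin qx => U (Fin.natAdd qy j) ω ≤ u)).card : ℝ) / qx) ''
          Set.Ioo (0 : ℝ) 1)} := by
  classical
  set G : Set Ω := ⋂ j, (U j) ⁻¹' Set.Ioo (0:ℝ) 1 with hG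
  have hGmeas : MeasurableSet G := MeasurableSet.iInter fun j => (hmeas j) measurableSet_Ioo
  have hGc : P Gᶜ = 0 := by
    have h1 : ∀ j, P ((U j) ⁻¹' Set.Ioo (0:ℝ) 1) = 1 := by
      intro j
      have := Measure.map_apply (μ := P) (hmeas j) (measurableSet_Ioo (a := (0:ℝ)) (b := 1))
      rw [hunif j] at this
      rw [← this]
      simp [Real.volume_Ioo]
    have : Gᶜ = ⋃ j, ((U j) ⁻¹' Set.Ioo (0:ℝ) 1)ᶜ := by
      simp [hG, Set.compl_iInter]
    simp only [this]
    refine measure_iUnion_null fun j => ?_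
    have h2 := measure_compl (s := (U j) ⁻¹' Set.Ioo (0:ℝ) 1)
      ((hmeas j) measurableSet_Ioo) (measure_ne_top P _)
    rw [h1 j, measure_univ] at h2
    simpa using h2
  -- notation
  set Ay : Ω → ℝ → ℝ := fun ω u =>
    ((Finset.univ.filter (fun j : Fin qy => U (Fin.castAdd qx j) ω ≤ u)).card : ℝ) / qy with hAy
  set Bx : Ω → ℝ → ℝ := fun ω u =>
    ((Finset.univ.filter (fun j : Fin qx => U (Fin.natAdd qy j) ω ≤ u)).card : ℝ) / qx with hBx
  have hAy01 : ∀ ω u, 0 ≤ Ay ω u ∧ Ay ω u ≤ 1 := by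
    intro ω u
    refine ⟨by positivity, ?_⟩
    rw [hAy, div_le_one (by exact_mod_cast hqy)]
    exact_mod_cast (Finset.card_filter_le _ _).trans (by simp)
  have hBx01 : ∀ ω u, 0 ≤ Bx ω u ∧ Bx ω u ≤ 1 := by
    intro ω u
    refine ⟨by positivity, ?_⟩
    rw [hBx, div_le_one (by exact_mod_cast hqx)]
    exact_mod_cast (Finset.card_filter_le _ _).trans (by simp)
  have hAymono : ∀ ω, Monotone (Ay ω) := by
    intro ω u v huv
    have hsubf : Finset.univ.filter (fun j : Fin qy => U (Fin.castAdd qx j) ω ≤ u) ⊆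
        Finset.univ.filter (fun j : Fin qy => U (Fin.castAdd qx j) ω ≤ v) := by
      apply Finset.monotone_filter_right
      intro j _ hj
      exact hj.trans huv
    have hc2 : ((Finset.univ.filter (fun j : Fin qy => U (Fin.castAdd qx j) ω ≤ u)).card : ℝ) ≤
        ((Finset.univ.filter (fun j : Fin qy => U (Fin.castAdd qx j) ω ≤ v)).card : ℝ) := by
      exact_mod_cast Finset.card_le_card hsubf
    show ((Finset.univ.filter (fun j : Fin qy => U (Fin.castAdd qx j) ω ≤ u)).card : ℝ) / qy ≤
        ((Finset.univ.filter (fun j : Fin qy => U (Fin.castAdd qx j) ω ≤ v)).card : ℝ) / qy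
    gcongr
  -- the key pointwise inclusion
  have hsub : {ω | c < ⨆ t : ℝ, (Ay ω (FY t) - Bx ω (FX t))} ⊆
      {ω | c < sSup ((fun u => Ay ω u - Bx ω u) '' Set.Ioo (0:ℝ) 1)} ∪ Gᶜ := by
    intro ω hω
    by_cases hωG : ω ∈ G
    · left
      have hU : ∀ j, U j ω ∈ Set.Ioo (0:ℝ) 1 := fun j => Set.mem_iInter.mp hωG j
      have hne : (Finset.univ : Finset (Fin (qy + qx))).Nonempty :=
        ⟨⟨0, by omega⟩, Finset.mem_univ _⟩
      set m : ℝ := Finset.univ.inf' hne (fun j => U j ω) with hm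
      set M : ℝ := Finset.univ.sup' hne (fun j => U j ω) with hMdef
      have hm0 : 0 < m := by
        rw [hm, Finset.lt_inf'_iff]
        exact fun j _ => (hU j).1
      have hmle : ∀ j, m ≤ U j ω := fun j =>
        Finset.inf'_le (fun j => U j ω) (Finset.mem_univ j)
      have hleM : ∀ j, U j ω ≤ M := fun j =>
        Finset.le_sup' (fun j => U j ω) (Finset.mem_univ j)
      have hM1 : M < 1 := by
        rw [hMdef, Finset.sup'_lt_iff]
        exact fun j _ => (hU j).2
      have hM0 : 0 < M := lt_of_lt_of_le hm0 (le_trans (hmle ⟨0, by omega⟩) (hleM _))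
      -- the sup set is bounded above by 1
      have hbdd : BddAbove ((fun u => Ay ω u - Bx ω u) '' Set.Ioo (0:ℝ) 1) := by
        refine ⟨1, fun v hv => ?_⟩
        obtain ⟨u, -, rfl⟩ := hv
        have h1 := (hAy01 ω u).2
        have h2 := (hBx01 ω u).1
        show Ay ω u - Bx ω u ≤ 1
        linarith
      obtain ⟨t, ht⟩ := exists_lt_of_lt_ciSup
        (show c < ⨆ t : ℝ, (Ay ω (FY t) - Bx ω (FX t)) from hω)
      -- find u ∈ (0,1) with statistic at t ≤ Δ u
      have key : ∃ u ∈ Set.Ioo (0:ℝ) 1, Ay ω (FY t) - Bx ω (FX t) ≤ Ay ω u - Bx ω u := by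
        rcases lt_or_ge 0 (FX t) with h0 | h0
        · rcases lt_or_ge (FX t) 1 with h1 | h1
          · exact ⟨FX t, ⟨h0, h1⟩, by
              have := hAymono ω (hdom t)
              linarith⟩
          · -- FX t ≥ 1 : use u = (M+1)/2
            refine ⟨(M + 1) / 2, ⟨by linarith, by linarith⟩, ?_⟩
            have hBfull : Bx ω (FX t) = 1 := by
              rw [hBx]
              have : (Finset.univ.filter (fun j : Fin qx => U (Fin.natAdd qy j) ω ≤ FX t)) =
                  Finset.univ := by
                refine Finset.filter_true_of_mem fun j _ => ?_
                exact le_trans (le_of_lt (hU _).2) h1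
              simp only [this]
              simp [Finset.card_univ]
              omega
            have hAfull : Ay ω ((M + 1) / 2) = 1 := by
              rw [hAy]
              have : (Finset.univ.filter (fun j : Fin qy => U (Fin.castAdd qx j) ω ≤ (M+1)/2)) =
                  Finset.univ := by
                refine Finset.filter_true_of_mem fun j _ => ?_
                have := hleM (Fin.castAdd qx j); linarith
              simp only [this]
              simp [Finset.card_univ]
              omega
            have hBfull2 : Bx ω ((M + 1) / 2) = 1 := by
              rw [hBx]
              have : (Finset.univ.filter (fun j : Fin qx => U (Fin.natAdd qy j) ω ≤ (M+1)/2)) =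
                  Finset.univ := by
                refine Finset.filter_true_of_mem fun j _ => ?_
                have := hleM (Fin.natAdd qy j); linarith
              simp only [this]
              simp [Finset.card_univ]
              omega
            have := (hAy01 ω (FY t)).2
            rw [hBfull, hAfull, hBfull2]
            linarith
        · -- FX t ≤ 0 : use u = m/2
          refine ⟨m / 2, ⟨by linarith, by
              have := hleM ⟨0, by omega⟩
              have := hmle ⟨0, by omega⟩
              linarith⟩, ?_⟩
          have hA0 : Ay ω (FY t) = 0 := by
            rw [hAy]
            have : (Finset.univ.filter (fun j : Fin qy => U (Fin.castAdd qx j) ω ≤ FY t)) = ∅ := by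
              refine Finset.filter_eq_empty_iff.mpr fun j _ => ?_
              have h := (hU (Fin.castAdd qx j)).1
              have := hdom t
              push_neg
              linarith
            simp only [this]; simp
          have hA0' : Ay ω (m / 2) = 0 := by
            rw [hAy]
            have : (Finset.univ.filter (fun j : Fin qy => U (Fin.castAdd qx j) ω ≤ m/2)) = ∅ := by
              refine Finset.filter_eq_empty_iff.mpr fun j _ => ?_
              have := hmle (Fin.castAdd qx j)
              push_neg
              linarith
            simp only [this]; simp
          have hB0' : Bx ω (m / 2) = 0 := by
            rw [hBx]
            have : (Finset.univ.filter (fun j : Fin qx => U (Fin.natAdd qy j) ω ≤ m/2)) = ∅ := by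
              refine Finset.filter_eq_empty_iff.mpr fun j _ => ?_
              have := hmle (Fin.natAdd qy j)
              push_neg
              linarith
            simp only [this]; simp
          have := (hBx01 ω (FX t)).1
          rw [hA0, hA0', hB0']
          linarith
      obtain ⟨u, hu, hle⟩ := key
      have hmem : Ay ω u - Bx ω u ∈ (fun u => Ay ω u - Bx ω u) '' Set.Ioo (0:ℝ) 1 :=
        ⟨u, hu, rfl⟩
      exact lt_of_lt_of_le (lt_of_lt_of_le ht hle) (le_csSup hbdd hmem)
    · right; exact hωG
  calc P {ω | c < ⨆ t : ℝ, (Ay ω (FY t) - Bx ω (FX t))}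
      ≤ P ({ω | c < sSup ((fun u => Ay ω u - Bx ω u) '' Set.Ioo (0:ℝ) 1)} ∪ Gᶜ) :=
        measure_mono hsub
    _ ≤ P {ω | c < sSup ((fun u => Ay ω u - Bx ω u) '' Set.Ioo (0:ℝ) 1)} + P Gᶜ :=
        measure_union_le _ _
    _ = P {ω | c < sSup ((fun u => Ay ω u - Bx ω u) '' Set.Ioo (0:ℝ) 1)} := by
        rw [hGc, add_zero]
end
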